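/- arXiv:2101.12722 — 3 statements merged into one kernel-verified Lean document; each statement's English description precedes it below -/
import Mathlib

section
/- Fix integers n ≥ d ≥ 2 and w with d-1 ≤ w ≤ n, and let B : ℕ → ℤ be any function. Then ∑_{j=w-d+2}^{w} (-1)^j * ∑_{v=0}^{w-j} C(j+n-w, j) * C(n-v, w-j-v) * B(v) equals (-1)^{w-d} * ∑_{v=0}^{d-2} C(n-v, w-v) * C(w-1-v, d-2-v) * B(v). -/
lemma neg_one_pow_sub' (a b : ℕ) (h : b ≤ a) : (-1:ℤ)^(a-b) = (-1)^a * (-1)^b := by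
  obtain ⟨c, rfl⟩ := Nat.exists_eq_add_of_le h
  rw [Nat.add_sub_cancel_left, pow_add, mul_comm, ← mul_assoc, ← pow_add, ← two_mul,
    pow_mul, neg_one_sq, one_pow, one_mul]

lemma altsum (m k : ℕ) (hm : 1 ≤ m) :
    ∑ i ∈ Finset.range (k+1), (-1:ℤ)^i * (m.choose i : ℤ) = (-1)^k * ((m-1).choose k : ℤ) := by
  induction k with
  | zero => simp
  | succ k ih =>
    rw [Finset.sum_range_succ, ih]
    obtain ⟨m', rfl⟩ : ∃ m', m = m' + 1 := ⟨m-1, by omega⟩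
    simp only [Nat.add_sub_cancel, Nat.choose_succ_succ, pow_succ]
    push_cast
    ring

lemma keyv (n d w v : ℕ) (hd : 2 ≤ d) (hw1 : d - 1 ≤ w) (hw2 : w ≤ n) (hv : v ≤ d-2) :
    ∑ j ∈ Finset.Icc (w+2-d) (w-v),
      (-1:ℤ)^j * (((j+n-w).choose j : ℤ) * ((n-v).choose (w-j-v) : ℤ))
    = (-1)^(w+d) * (((n-v).choose (w-v) : ℤ) * ((w-1-v).choose (d-2-v) : ℤ)) := by
  have himg : Finset.Icc (w+2-d) (w-v) = (Finset.range (d-1-v)).image (fun i => w-v-i) := by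
    ext j
    simp only [Finset.mem_Icc, Finset.mem_image, Finset.mem_range]
    constructor
    · intro h; exact ⟨w-v-j, by omega, by omega⟩
    · rintro ⟨i, hi, rfl⟩; omega
  rw [himg, Finset.sum_image (by intro a ha b hb hab; simp only [Finset.coe_range, Set.mem_Iio, Finset.mem_range] at ha hb hab; omega)]
  have step : ∀ i ∈ Finset.range (d-1-v),
      (-1:ℤ)^(w-v-i) * (((w-v-i+n-w).choose (w-v-i) : ℤ) * ((n-v).choose (w-(w-v-i)-v) : ℤ))
      = ((-1)^(w-v) * ((n-v).choose (w-v) : ℤ)) * ((-1)^i * (((w-v).choose i : ℤ))) := by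
    intro i hi
    simp only [Finset.mem_range] at hi
    have h1 : w-v-i+n-w = n-v-i := by omega
    have h2 : w-(w-v-i)-v = i := by omega
    rw [h1, h2, neg_one_pow_sub' (w-v) i (by omega)]
    have h3 : ((n-v).choose (w-v) : ℤ) * ((w-v).choose i : ℤ)
        = ((n-v).choose i : ℤ) * ((n-v-i).choose (w-v-i) : ℤ) := by
      exact_mod_cast congrArg (Nat.cast : ℕ → ℤ)
        (Nat.choose_mul (n := n-v) (k := w-v) (s := i) (by omega))
    linear_combination (-((-1:ℤ)^(w-v) * (-1)^i)) * h3
  rw [Finset.sum_congr rfl step, ← Finset.mul_sum]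
  have hd1 : d-1-v = (d-2-v)+1 := by omega
  rw [hd1, altsum (w-v) (d-2-v) (by omega)]
  have hww : w - v - 1 = w - 1 - v := by omega
  rw [hww, neg_one_pow_sub' w v (by omega), neg_one_pow_sub' (d-2) v (by omega),
    neg_one_pow_sub' d 2 (by omega), pow_add]
  have hvv : ((-1:ℤ)^v) * ((-1:ℤ)^v) = 1 := by
    rw [← pow_add, ← two_mul, pow_mul]; norm_num
  linear_combination ((-1:ℤ)^w * (-1)^d * ((n-v).choose (w-v):ℤ)
    * ((w-1-v).choose (d-2-v):ℤ)) * hvv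

/-- Lemma 3.2 (key combinatorial step transforming the Bonneau formula):
for `n ≥ d ≥ 2`, `d-1 ≤ w ≤ n`, and any `B : ℕ → ℤ`,
`∑_{j=w-d+2}^{w} (-1)^j ∑_{v=0}^{w-j} C(j+n-w, j) C(n-v, w-j-v) B(v)
  = (-1)^{w-d} ∑_{v=0}^{d-2} C(n-v, w-v) C(w-1-v, d-2-v) B(v)`.
(The sign `(-1)^{w-d}` is written as `(-1)^{w+d}`, which has the same parity
and is meaningful also for `w = d - 1`.) -/
theorem bonneau_second_part (n d w : ℕ) (B : ℕ → ℤ) (hd : 2 ≤ d) (hdn : d ≤ n)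
    (hw1 : d - 1 ≤ w) (hw2 : w ≤ n) :
    ∑ j ∈ Finset.Icc (w + 2 - d) w, (-1 : ℤ) ^ j *
        ∑ v ∈ Finset.range (w - j + 1),
          ((j + n - w).choose j : ℤ) * ((n - v).choose (w - j - v) : ℤ) * B v =
      (-1 : ℤ) ^ (w + d) *
        ∑ v ∈ Finset.range (d - 1),
          ((n - v).choose (w - v) : ℤ) * ((w - 1 - v).choose (d - 2 - v) : ℤ) * B v := by
  simp only [Finset.mul_sum]
  rw [Finset.sum_comm' (t' := Finset.range (d-1)) (s' := fun v => Finset.Icc (w+2-d) (w-v))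
    (by
      intro j v
      simp only [Finset.mem_Icc, Finset.mem_range]
      omega)]
  refine Finset.sum_congr rfl ?_
  intro v hv
  simp only [Finset.mem_range] at hv
  have hstep : ∀ j ∈ Finset.Icc (w+2-d) (w-v),
      (-1:ℤ)^j * (((j + n - w).choose j : ℤ) * ((n - v).choose (w - j - v) : ℤ) * B v)
      = ((-1:ℤ)^j * (((j + n - w).choose j : ℤ) * ((n - v).choose (w - j - v) : ℤ))) * B v :=
    fun j _ => by ring
  rw [Finset.sum_congr rfl hstep, ← Finset.sum_mul,
    keyv n d w v hd hw1 hw2 (by omega)]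
  ring
end

section
/- Let C be a linear [n,k,d]_q MDS code (d = n-k+1) with d ≥ 3, and let V be a coset of C of weight 1. Then the number of vectors of weight d-1 in V equals C(n-1, d-1). -/
open Finset

def suppSub (F : Type) [Field F] {n : ℕ} (T : Finset (Fin n)) : Submodule F (Fin n → F) where
  carrier := {x | ∀ j ∉ T, x j = 0}
  add_mem' := fun ha hb j hj => by simp [ha j hj, hb j hj]
  zero_mem' := fun j _ => rfl
  smul_mem' := fun c a ha j hj => by simp [ha j hj]

lemma mem_suppSub {F : Type} [Field F] {n : ℕ} {T : Finset (Fin n)} {x : Fin n → F} :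
    x ∈ suppSub F T ↔ ∀ j ∉ T, x j = 0 := Iff.rfl

noncomputable def suppSubEquiv (F : Type) [Field F] {n : ℕ} (T : Finset (Fin n)) :
    suppSub F T ≃ₗ[F] (T → F) where
  toFun x j := x.1 j
  map_add' x y := rfl
  map_smul' c x := rfl
  invFun f := ⟨fun j => if h : j ∈ T then f ⟨j, h⟩ else 0, fun j hj => by simp [hj]⟩
  left_inv x := by
    ext j
    by_cases h : j ∈ T <;> simp [h]
    exact (x.2 j h).symm
  right_inv f := by ext j; simp

lemma finrank_suppSub (F : Type) [Field F] {n : ℕ} (T : Finset (Fin n)) :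
    Module.finrank F (suppSub F T) = T.card := by
  rw [(suppSubEquiv F T).finrank_eq, Module.finrank_fintype_fun_eq_card, Fintype.card_coe]

lemma hn_eq_card_filter {F : Type} [Field F] [DecidableEq F] {n : ℕ} (x : Fin n → F) :
    hammingNorm x = #{j | x j ≠ 0} := rfl

lemma exists_supported {n k d : ℕ} {F : Type} [Field F] [Fintype F]
    [DecidableEq F] {C : Submodule F (Fin n → F)} (hk : Module.finrank F C = k)
    (hmds : d = n - k + 1)
    (hdmin : ∀ c ∈ C, c ≠ 0 → d ≤ hammingNorm c)
    (T : Finset (Fin n)) (hT : T.card = d) :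
    ∃ g ∈ C, (∀ j ∉ T, g j = 0) ∧ ∀ j ∈ T, g j ≠ 0 := by
  have hkn : k ≤ n := by
    rw [← hk]
    have := Submodule.finrank_le C
    simpa using this
  set W := suppSub F T with hW
  have h1 : Module.finrank F ↥(C ⊔ W) + Module.finrank F ↥(C ⊓ W) = k + d := by
    rw [Submodule.finrank_sup_add_finrank_inf_eq, hk, finrank_suppSub, hT]
  have h2 : Module.finrank F ↥(C ⊔ W) ≤ n := by
    have := Submodule.finrank_le (C ⊔ W)
    simpa using this
  have h3 : 0 < Module.finrank F ↥(C ⊓ W) := by omega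
  have hne : C ⊓ W ≠ ⊥ := by
    intro h
    rw [h] at h3
    simp at h3
  obtain ⟨g, hgmem, hg0⟩ := Submodule.exists_mem_ne_zero_of_ne_bot hne
  have hgC : g ∈ C := hgmem.1
  have hgW : ∀ j ∉ T, g j = 0 := hgmem.2
  refine ⟨g, hgC, hgW, ?_⟩
  have hsub : ({j | g j ≠ 0} : Finset (Fin n)) ⊆ T := by
    intro j hj
    simp only [mem_filter] at hj
    by_contra hjT
    exact hj.2 (hgW j hjT)
  have hcard : T.card ≤ #{j | g j ≠ 0} := by
    rw [hT, ← hn_eq_card_filter]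
    exact hdmin g hgC hg0
  have heq : ({j | g j ≠ 0} : Finset (Fin n)) = T :=
    Finset.eq_of_subset_of_card_le hsub hcard
  intro j hj
  have : j ∈ ({j | g j ≠ 0} : Finset (Fin n)) := heq ▸ hj
  simpa using this

lemma supp_add_single {F : Type} [Field F] [DecidableEq F] {n : ℕ} {c e : Fin n → F}
    {i0 : Fin n} (he : ∀ j ≠ i0, e j = 0) (hc : c i0 = -e i0) :
    ({j | (c + e) j ≠ 0} : Finset (Fin n)) = ({j | c j ≠ 0} : Finset (Fin n)).erase i0 := by
  ext j
  simp only [Finset.mem_erase, mem_filter, mem_univ, true_and, Pi.add_apply]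
  by_cases hj : j = i0
  · subst hj
    simp [hc]
  · simp [he j hj, hj]

/-- Let `C` be an `[n,k,d]_q` MDS code (`d = n - k + 1`) with `d ≥ 3`, and let `V = v + C`
be a coset of weight 1. Then the number of vectors of weight `d-1` in `V` equals
`C(n-1, d-1)`. -/
theorem weight_one_coset_dminus1_count (n k d : ℕ) (F : Type) [Field F] [Fintype F]
    [DecidableEq F] (C : Submodule F (Fin n → F)) (hk : Module.finrank F C = k)
    (hmds : d = n - k + 1) (hd3 : 3 ≤ d)
    (hdmin : ∀ c ∈ C, c ≠ 0 → d ≤ hammingNorm c)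
    (hdex : ∃ c ∈ C, c ≠ 0 ∧ hammingNorm c = d)
    (v : Fin n → F)
    (hW : IsLeast {w : ℕ | ∃ x : Fin n → F, x - v ∈ C ∧ hammingNorm x = w} 1) :
    Nat.card {x : Fin n → F // x - v ∈ C ∧ hammingNorm x = d - 1} =
      (n - 1).choose (d - 1) := by
  classical
  obtain ⟨e, heC, hwe⟩ := hW.1
  -- extract i0, the support of e
  obtain ⟨i0, hi0⟩ : ∃ i0, ({j | e j ≠ 0} : Finset (Fin n)) = {i0} :=
    Finset.card_eq_one.mp (by rw [← hn_eq_card_filter]; exact hwe)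
  have he0 : e i0 ≠ 0 := by
    have : i0 ∈ ({j | e j ≠ 0} : Finset (Fin n)) := by rw [hi0]; exact Finset.mem_singleton_self _
    simpa using this
  have heoff : ∀ j ≠ i0, e j = 0 := by
    intro j hj
    by_contra h
    have : j ∈ ({j | e j ≠ 0} : Finset (Fin n)) := by simpa using h
    rw [hi0, Finset.mem_singleton] at this
    exact hj this
  -- step 1 : equiv to codewords of weight d with value -e i0 at i0
  have step1 : Nat.card {x : Fin n → F // x - v ∈ C ∧ hammingNorm x = d - 1} =
      Nat.card {c : Fin n → F // c ∈ C ∧ hammingNorm c = d ∧ c i0 = -e i0} := by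
    refine Nat.card_congr ?_
    have fwd : ∀ x : Fin n → F, x - v ∈ C → hammingNorm x = d - 1 →
        (x - e) ∈ C ∧ hammingNorm (x - e) = d ∧ (x - e) i0 = -e i0 := by
      intro x hxv hwx
      set c := x - e with hcdef
      have hcC : c ∈ C := by
        have : (x - v) - (e - v) ∈ C := Submodule.sub_mem C hxv heC
        simpa [hcdef, sub_sub_sub_cancel_right] using this
      have hcne : c ≠ 0 := by
        intro h
        have hxe : x = e := by
          have := sub_eq_zero.mp h
          exact this
        rw [hxe, hwe] at hwx
        omega
      have hdc : d ≤ hammingNorm c := hdmin c hcC hcne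
      have hxce : x = c + e := by simp [hcdef]
      -- supp c erase i0 ⊆ supp x
      have hsub : (({j | c j ≠ 0} : Finset (Fin n)).erase i0) ⊆
          ({j | x j ≠ 0} : Finset (Fin n)) := by
        intro j hj
        rw [Finset.mem_erase] at hj
        obtain ⟨hji, hjc⟩ := hj
        simp only [mem_filter, mem_univ, true_and] at hjc ⊢
        rw [hxce]
        simpa [heoff j hji] using hjc
      have hcardx : ({j | x j ≠ 0} : Finset (Fin n)).card = d - 1 := by
        rw [← hn_eq_card_filter]; exact hwx
      have hi0c : i0 ∈ ({j | c j ≠ 0} : Finset (Fin n)) := by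
        by_contra h
        have heq : (({j | c j ≠ 0} : Finset (Fin n)).erase i0) =
            ({j | c j ≠ 0} : Finset (Fin n)) := Finset.erase_eq_of_notMem h
        have := Finset.card_le_card hsub
        rw [heq, hcardx, ← hn_eq_card_filter] at this
        omega
      have hcarderase : (({j | c j ≠ 0} : Finset (Fin n)).erase i0).card =
          hammingNorm c - 1 := by
        rw [Finset.card_erase_of_mem hi0c, ← hn_eq_card_filter]
      have hle := Finset.card_le_card hsub
      rw [hcarderase, hcardx] at hle
      have hwc : hammingNorm c = d := by omega
      -- supports are equal
      have heq : (({j | c j ≠ 0} : Finset (Fin n)).erase i0) =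
          ({j | x j ≠ 0} : Finset (Fin n)) := by
        apply Finset.eq_of_subset_of_card_le hsub
        rw [hcarderase, hcardx, hwc]
      have hxi0 : x i0 = 0 := by
        by_contra h
        have : i0 ∈ ({j | x j ≠ 0} : Finset (Fin n)) := by simpa using h
        rw [← heq] at this
        exact (Finset.notMem_erase i0 _) this
      have hci0 : c i0 = -e i0 := by
        have : c i0 + e i0 = 0 := by rw [← Pi.add_apply, ← hxce]; exact hxi0
        exact eq_neg_of_add_eq_zero_left this
      exact ⟨hcC, hwc, hci0⟩
    have bwd : ∀ c : Fin n → F, c ∈ C → hammingNorm c = d → c i0 = -e i0 →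
        (c + e) - v ∈ C ∧ hammingNorm (c + e) = d - 1 := by
      intro c hcC hwc hci0
      constructor
      · have : c + (e - v) ∈ C := Submodule.add_mem C hcC heC
        simpa [add_sub_assoc] using this
      · have hi0c : i0 ∈ ({j | c j ≠ 0} : Finset (Fin n)) := by
          simp only [mem_filter, mem_univ, true_and]
          rw [hci0]
          exact neg_ne_zero.mpr he0
        rw [hn_eq_card_filter, supp_add_single heoff hci0,
          Finset.card_erase_of_mem hi0c, ← hn_eq_card_filter, hwc]
    exact
      { toFun := fun x => ⟨x.1 - e, fwd x.1 x.2.1 x.2.2⟩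
        invFun := fun c => ⟨c.1 + e, bwd c.1 c.2.1 c.2.2.1 c.2.2.2⟩
        left_inv := fun x => by ext1; simp
        right_inv := fun c => by ext1; simp }
  -- step 2 : bijection with supports
  have step2 : Nat.card {c : Fin n → F // c ∈ C ∧ hammingNorm c = d ∧ c i0 = -e i0} =
      Nat.card {T : Finset (Fin n) // i0 ∈ T ∧ T.card = d} := by
    have hmemS : ∀ c : {c : Fin n → F // c ∈ C ∧ hammingNorm c = d ∧ c i0 = -e i0},
        i0 ∈ ({j | c.1 j ≠ 0} : Finset (Fin n)) ∧
          ({j | c.1 j ≠ 0} : Finset (Fin n)).card = d := by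
      intro c
      constructor
      · simp only [mem_filter, mem_univ, true_and]
        rw [c.2.2.2]
        exact neg_ne_zero.mpr he0
      · rw [← hn_eq_card_filter]; exact c.2.2.1
    refine Nat.card_eq_of_bijective
      (fun c => ⟨({j | c.1 j ≠ 0} : Finset (Fin n)), (hmemS c).1, (hmemS c).2⟩) ⟨?_, ?_⟩
    · -- injective
      rintro ⟨c1, hc1C, hwc1, hci1⟩ ⟨c2, hc2C, hwc2, hci2⟩ h
      simp only [Subtype.mk.injEq] at h ⊢
      have hsupp : ({j | c1 j ≠ 0} : Finset (Fin n)) = ({j | c2 j ≠ 0} : Finset (Fin n)) := h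
      by_contra hne
      have hdiff : c1 - c2 ∈ C := Submodule.sub_mem C hc1C hc2C
      have hdne : c1 - c2 ≠ 0 := fun h0 => hne (sub_eq_zero.mp h0)
      have hd' := hdmin _ hdiff hdne
      have hsub : ({j | (c1 - c2) j ≠ 0} : Finset (Fin n)) ⊆
          ({j | c1 j ≠ 0} : Finset (Fin n)).erase i0 := by
        intro j hj
        simp only [mem_filter, mem_univ, true_and, Pi.sub_apply] at hj
        rw [Finset.mem_erase]
        constructor
        · intro hji
          subst hji
          rw [hci1, hci2] at hj
          simp at hj
        · simp only [mem_filter, mem_univ, true_and]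
          intro h1
          rw [h1] at hj
          have : c2 j ≠ 0 := fun h2 => hj (by rw [h2, sub_zero])
          have : j ∈ ({j | c2 j ≠ 0} : Finset (Fin n)) := by simpa using this
          rw [← hsupp] at this
          exact (by simpa using this : c1 j ≠ 0) h1
      have hi01 : i0 ∈ ({j | c1 j ≠ 0} : Finset (Fin n)) := by
        simp only [mem_filter, mem_univ, true_and]
        rw [hci1]
        exact neg_ne_zero.mpr he0
      have := Finset.card_le_card hsub
      rw [Finset.card_erase_of_mem hi01] at this
      rw [← hn_eq_card_filter (c1 - c2)] at this
      rw [← hn_eq_card_filter c1] at this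
      rw [hwc1] at this
      exact absurd (hd'.trans this)
        (Nat.not_le.mpr (Nat.sub_lt (lt_of_lt_of_le (by norm_num) hd3) Nat.one_pos))
    · -- surjective
      rintro ⟨T, hi0T, hTd⟩
      obtain ⟨g, hgC, hgout, hgin⟩ := exists_supported hk hmds hdmin T hTd
      have hgi0 : g i0 ≠ 0 := hgin i0 hi0T
      set lam := (-e i0) * (g i0)⁻¹ with hlam
      have hlne : lam ≠ 0 := by
        apply mul_ne_zero (neg_ne_zero.mpr he0) (inv_ne_zero hgi0)
      refine ⟨⟨lam • g, Submodule.smul_mem C lam hgC, ?_, ?_⟩, ?_⟩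
      · rw [hn_eq_card_filter, ← hTd]
        congr 1
        ext j
        simp only [mem_filter, mem_univ, true_and, Pi.smul_apply, smul_eq_mul,
          mul_ne_zero_iff]
        constructor
        · intro h
          by_contra hjT
          exact h.2 (hgout j hjT)
        · intro h
          exact ⟨hlne, hgin j h⟩
      · simp only [Pi.smul_apply, smul_eq_mul, hlam]
        field_simp
      · apply Subtype.ext
        simp only
        ext j
        simp only [mem_filter, mem_univ, true_and, Pi.smul_apply, smul_eq_mul,
          mul_ne_zero_iff]
        constructor
        · intro h
          by_contra hjT
          exact h.2 (hgout j hjT)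
        · intro h
          exact ⟨hlne, hgin j h⟩
  -- step 3 : count the supports
  have step3 : Nat.card {T : Finset (Fin n) // i0 ∈ T ∧ T.card = d} =
      (n - 1).choose (d - 1) := by
    have equ : {T : Finset (Fin n) // i0 ∈ T ∧ T.card = d} ≃
        {T' : Finset (Fin n) //
          T' ∈ Finset.powersetCard (d - 1) ((Finset.univ : Finset (Fin n)).erase i0)} :=
      { toFun := fun T => ⟨T.1.erase i0, by
          rw [Finset.mem_powersetCard]
          constructor
          · exact Finset.erase_subset_erase i0 (Finset.subset_univ T.1)
          · rw [Finset.card_erase_of_mem T.2.1, T.2.2]⟩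
        invFun := fun T' => ⟨insert i0 T'.1, by
          have hmem := Finset.mem_powersetCard.mp T'.2
          have hni : i0 ∉ T'.1 := fun h => (Finset.mem_erase.mp (hmem.1 h)).1 rfl
          refine ⟨Finset.mem_insert_self _ _, ?_⟩
          have h2 := hmem.2
          rw [Finset.card_insert_of_notMem hni]
          rw [h2]
          exact Nat.sub_add_cancel (le_trans (by norm_num) hd3)⟩
        left_inv := fun T => by
          apply Subtype.ext
          exact Finset.insert_erase T.2.1
        right_inv := fun T' => by
          apply Subtype.ext
          have hmem := Finset.mem_powersetCard.mp T'.2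
          have hni : i0 ∉ T'.1 := fun h => (Finset.mem_erase.mp (hmem.1 h)).1 rfl
          exact Finset.erase_insert hni }
    rw [Nat.card_congr equ, Nat.card_eq_fintype_card, Fintype.card_coe,
      Finset.card_powersetCard, Finset.card_erase_of_mem (Finset.mem_univ i0)]
    simp
  rw [step1, step2, step3]
end

section
/- Let q ≥ 5 be an odd prime power, let K be a conic in PG(2,q), P a point of K, and K* = K \ {P}. Then the q^2+1 points of PG(2,q) not on K* split into three classes: (q^2+q)/2 points each lying on exactly (q-1)/2 bisecants of K*, (q^2-q)/2 points each lying on exactly (q-3)/2 bisecants of K*, and the single point P lying on 0 bisecants of K*. -/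
/-- The conic `{(1,t,t²) : t ∈ F_q} ∪ {(0,0,1)}` in `PG(2,q)`, i.e. the zero set of
the quadratic form `x₀x₂ = x₁²`. -/
def conicSet (F : Type*) [Field F] : Set (Projectivization F (Fin 3 → F)) :=
  {p | p.rep 0 * p.rep 2 = p.rep 1 ^ 2}

/-- A point of `PG(2,q)` lies on a line (a 2-dimensional subspace of `F³`). -/
def onLine (F : Type*) [Field F] (p : Projectivization F (Fin 3 → F))
    (L : Submodule F (Fin 3 → F)) : Prop :=
  p.submodule ≤ L

/-- A line of `PG(2,q)`: a 2-dimensional linear subspace of `F³`. -/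
def isLine (F : Type*) [Field F] (L : Submodule F (Fin 3 → F)) : Prop :=
  Module.finrank F L = 2

/-- A bisecant of a point set `S`: a line meeting `S` in exactly two points. -/
def isBisecant (F : Type*) [Field F] (S : Set (Projectivization F (Fin 3 → F)))
    (L : Submodule F (Fin 3 → F)) : Prop :=
  isLine F L ∧ Nat.card {p : Projectivization F (Fin 3 → F) // p ∈ S ∧ onLine F p L} = 2

/-- A tangent (unisecant) of a point set `S`: a line meeting `S` in exactly one point. -/
def isTangent (F : Type*) [Field F] (S : Set (Projectivization F (Fin 3 → F)))
    (L : Submodule F (Fin 3 → F)) : Prop :=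
  isLine F L ∧ Nat.card {p : Projectivization F (Fin 3 → F) // p ∈ S ∧ onLine F p L} = 1

/-- The number of bisecants of `S` through a point `p`. -/
noncomputable def bisecantCount (F : Type*) [Field F] (S : Set (Projectivization F (Fin 3 → F)))
    (p : Projectivization F (Fin 3 → F)) : ℕ :=
  Nat.card {L : Submodule F (Fin 3 → F) // isBisecant F S L ∧ onLine F p L}

/-- The number of tangents of `S` through a point `p`. -/
noncomputable def tangentCount (F : Type*) [Field F] (S : Set (Projectivization F (Fin 3 → F)))
    (p : Projectivization F (Fin 3 → F)) : ℕ :=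
  Nat.card {L : Submodule F (Fin 3 → F) // isTangent F S L ∧ onLine F p L}

/-- An external point of the conic: off the conic, lying on exactly two tangents. -/
def isExternal (F : Type*) [Field F] (p : Projectivization F (Fin 3 → F)) : Prop :=
  p ∉ conicSet F ∧ tangentCount F (conicSet F) p = 2

/-- An internal point of the conic: off the conic, lying on no tangent. -/
def isInternal (F : Type*) [Field F] (p : Projectivization F (Fin 3 → F)) : Prop :=
  p ∉ conicSet F ∧ tangentCount F (conicSet F) p = 0

namespace CP
open Projectivization Submodule

variable {F : Type} [Field F]

def cv (t : F) : Fin 3 → F := ![1, t, t^2]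

lemma card_subtype_pair {α : Type*} {p : α → Prop} {a b : α} (hab : a ≠ b)
    (h : ∀ x, p x ↔ x = a ∨ x = b) : Nat.card {x // p x} = 2 := by
  rw [Nat.card_eq_two_iff]
  refine ⟨⟨a, (h a).mpr (Or.inl rfl)⟩, ⟨b, (h b).mpr (Or.inr rfl)⟩,
    by simp [Subtype.ext_iff, hab], ?_⟩
  rw [Set.eq_univ_iff_forall]
  rintro ⟨x, hx⟩
  rcases (h x).mp hx with h' | h' <;> subst h' <;> simp

lemma card_subtype_unique {α : Type*} {p : α → Prop} {a : α} (h : ∀ x, p x ↔ x = a) :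
    Nat.card {x // p x} = 1 := by
  rw [Nat.card_eq_one_iff_unique]
  exact ⟨⟨fun x y => Subtype.ext (((h x).mp x.2).trans ((h y).mp y.2).symm)⟩,
    ⟨⟨a, (h a).mpr rfl⟩⟩⟩

lemma card_subtype_empty {α : Type*} {p : α → Prop} (h : ∀ x, ¬ p x) :
    Nat.card {x // p x} = 0 := by
  have : IsEmpty {x // p x} := ⟨fun x => h x x.2⟩
  exact Nat.card_of_isEmpty

lemma two_to_one {α β : Type*} [Finite α] (f : α → β) (hs : Function.Surjective f)
    (h2 : ∀ b, Nat.card {a // f a = b} = 2) : Nat.card α = 2 * Nat.card β := by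
  have : Finite β := Finite.of_surjective f hs
  cases nonempty_fintype α
  cases nonempty_fintype β
  classical
  rw [Nat.card_eq_fintype_card, Nat.card_eq_fintype_card, ← Finset.card_univ,
    Finset.card_eq_sum_card_fiberwise (f := f) (t := Finset.univ)
      (fun x _ => Finset.mem_univ _)]
  have : ∀ b : β, (Finset.univ.filter (fun a => f a = b)).card = 2 := by
    intro b
    have := h2 b
    rwa [Nat.card_eq_fintype_card, Fintype.card_subtype] at this
  rw [Finset.sum_congr rfl (fun b _ => this b), Finset.sum_const, Finset.card_univ,
    smul_eq_mul, mul_comm]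


def iv (F : Type) [Field F] : Fin 3 → F := ![0, 0, 1]

lemma cv_ne_zero (t : F) : cv t ≠ 0 := by
  intro h; have := congrFun h 0; simp [cv] at this

lemma iv_ne_zero : iv F ≠ 0 := by
  intro h; have := congrFun h 2; simp [iv] at this

lemma mem_conic_iff (v : Fin 3 → F) (hv : v ≠ 0) :
    Projectivization.mk F v hv ∈ conicSet F ↔ v 0 * v 2 = v 1 ^ 2 := by
  obtain ⟨a, ha⟩ := exists_smul_eq_mk_rep F v hv
  have h0 : (Projectivization.mk F v hv).rep = (a : F) • v := ha.symm
  unfold conicSet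
  simp only [Set.mem_setOf_eq, h0, Pi.smul_apply, smul_eq_mul]
  constructor
  · intro h
    exact mul_left_cancel₀ (pow_ne_zero 2 a.ne_zero)
      (by linear_combination h : (a : F) ^ 2 * (v 0 * v 2) = (a : F) ^ 2 * v 1 ^ 2)
  · intro h; linear_combination (a : F) ^ 2 * h

lemma onLine_mk (v : Fin 3 → F) (hv : v ≠ 0) (L : Submodule F (Fin 3 → F)) :
    onLine F (Projectivization.mk F v hv) L ↔ v ∈ L := by
  unfold onLine
  rw [Projectivization.submodule_mk, Submodule.span_singleton_le_iff_mem]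


lemma vec1_ne (y z : F) : (![1, y, z] : Fin 3 → F) ≠ 0 := by
  intro h; have := congrFun h 0; simp at this

lemma vec2_ne (z : F) : (![0, 1, z] : Fin 3 → F) ≠ 0 := by
  intro h; have := congrFun h 1; simp at this

/-- Enumeration of the projective plane. -/
noncomputable def enum : (F × F) ⊕ (F ⊕ Unit) → Projectivization F (Fin 3 → F)
  | .inl (y, z) => Projectivization.mk F ![1, y, z] (vec1_ne y z)
  | .inr (.inl z) => Projectivization.mk F ![0, 1, z] (vec2_ne z)
  | .inr (.inr _) => Projectivization.mk F (iv F) iv_ne_zero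

lemma enum_bijective : Function.Bijective (enum (F := F)) := by
  constructor
  · rintro (⟨y, z⟩ | z | u) (⟨y', z'⟩ | z' | u') h <;>
      simp only [enum, Projectivization.mk_eq_mk_iff, iv] at h <;>
      obtain ⟨a, ha⟩ := h
    · have h0 := congrFun ha 0
      have h1 := congrFun ha 1
      have h2 := congrFun ha 2
      simp [Units.smul_def] at h0 h1 h2
      subst h0; simp at h1 h2; simp [h1, h2]
    · have h0 := congrFun ha 0; simp [Units.smul_def] at h0
    · have h0 := congrFun ha 0; simp [Units.smul_def] at h0
    · have h0 := congrFun ha 0; simp [Units.smul_def] at h0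
    · have h1 := congrFun ha 1
      have h2 := congrFun ha 2
      simp [Units.smul_def] at h1 h2
      subst h1; simp at h2; simp [h2]
    · have h1 := congrFun ha 1; simp [Units.smul_def] at h1
    · have h0 := congrFun ha 0; simp [Units.smul_def] at h0
    · have h1 := congrFun ha 1; simp [Units.smul_def] at h1
    · rfl
  · intro p
    induction' p using Projectivization.ind with v hv
    by_cases h0 : v 0 ≠ 0
    · refine ⟨.inl (v 1 / v 0, v 2 / v 0), ?_⟩
      simp only [enum, Projectivization.mk_eq_mk_iff]
      exact ⟨(Units.mk0 (v 0) h0)⁻¹, by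
        funext i; fin_cases i <;> simp [Units.smul_def] <;> field_simp⟩
    · push_neg at h0
      by_cases h1 : v 1 ≠ 0
      · refine ⟨.inr (.inl (v 2 / v 1)), ?_⟩
        simp only [enum, Projectivization.mk_eq_mk_iff]
        exact ⟨(Units.mk0 (v 1) h1)⁻¹, by
          funext i; fin_cases i <;> simp [Units.smul_def, h0] <;> field_simp⟩
      · push_neg at h1
        have h2 : v 2 ≠ 0 := by
          intro h2; apply hv; funext i; fin_cases i <;> simp [h0, h1, h2]
        refine ⟨.inr (.inr ()), ?_⟩
        simp only [enum, Projectivization.mk_eq_mk_iff, iv]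
        exact ⟨(Units.mk0 (v 2) h2)⁻¹, by
          funext i; fin_cases i <;> simp [Units.smul_def, h0, h1, inv_mul_cancel₀ h2]⟩




lemma mem_span_cv {s t : F} (hst : s ≠ t) (v : Fin 3 → F) :
    v ∈ span F {cv s, cv t} ↔ v 0 * (s * t) - v 1 * (s + t) + v 2 = 0 := by
  rw [Submodule.mem_span_pair]
  constructor
  · rintro ⟨α, β, h⟩
    have h0 := congrFun h 0
    have h1 := congrFun h 1
    have h2 := congrFun h 2
    simp [cv] at h0 h1 h2
    rw [← h0, ← h1, ← h2]; ring
  · intro h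
    refine ⟨(v 1 - t * v 0) / (s - t), (s * v 0 - v 1) / (s - t), ?_⟩
    have hst' : s - t ≠ 0 := sub_ne_zero.mpr hst
    funext i
    fin_cases i
    · simp [cv]; field_simp; ring
    · simp [cv]; field_simp; ring
    · simp [cv]; field_simp
      linear_combination (-(s - t)) * h

lemma li_cv {s t : F} (hst : s ≠ t) : LinearIndependent F ![cv s, cv t] := by
  rw [LinearIndependent.pair_iff]
  intro a b hab
  have h0 := congrFun hab 0
  have h1 := congrFun hab 1
  simp [cv] at h0 h1
  constructor
  · have : a * (s - t) = 0 := by linear_combination h1 - t * h0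
    rcases mul_eq_zero.mp this with h | h
    · exact h
    · exact absurd (sub_eq_zero.mp h) hst
  · have : b * (t - s) = 0 := by linear_combination h1 - s * h0
    rcases mul_eq_zero.mp this with h | h
    · exact h
    · exact absurd (sub_eq_zero.mp h) (Ne.symm hst)

lemma finrank_span_cv {s t : F} (hst : s ≠ t) :
    Module.finrank F (span F {cv s, cv t}) = 2 := by
  have h := finrank_span_eq_card (R := F) (li_cv hst)
  have hr : Set.range ![cv s, cv t] = {cv s, cv t} := by
    simp [Matrix.range_cons, Matrix.range_empty]
    exact Set.pair_comm _ _
  rw [hr] at h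
  simpa using h


def Kpt (t : F) : Projectivization F (Fin 3 → F) := Projectivization.mk F (cv t) (cv_ne_zero t)

def Ppt (F : Type) [Field F] : Projectivization F (Fin 3 → F) :=
  Projectivization.mk F (iv F) iv_ne_zero

lemma Kpt_mem (t : F) : Kpt t ∈ conicSet F := by
  rw [Kpt, mem_conic_iff]; simp [cv]

lemma Ppt_mem : Ppt F ∈ conicSet F := by
  rw [Ppt, mem_conic_iff]; simp [iv]

lemma Kpt_inj {s t : F} : Kpt s = Kpt t ↔ s = t := by
  constructor
  · intro h
    rw [Kpt, Kpt, Projectivization.mk_eq_mk_iff] at h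
    obtain ⟨a, ha⟩ := h
    have h0 := congrFun ha 0
    have h1 := congrFun ha 1
    simp [cv, Units.smul_def] at h0 h1
    subst h0
    simpa using h1.symm
  · rintro rfl; rfl

lemma Kpt_ne_Ppt (t : F) : Kpt t ≠ Ppt F := by
  rw [Kpt, Ppt, Ne, Projectivization.mk_eq_mk_iff]
  rintro ⟨a, ha⟩
  have h0 := congrFun ha 0
  simp [cv, iv, Units.smul_def] at h0

lemma conic_classify {p : Projectivization F (Fin 3 → F)} (hp : p ∈ conicSet F) :
    p = Ppt F ∨ ∃ t, p = Kpt t := by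
  induction' p using Projectivization.ind with v hv
  rw [mem_conic_iff] at hp
  by_cases h0 : v 0 = 0
  · left
    have h1 : v 1 = 0 := by
      have : v 1 ^ 2 = 0 := by rw [← hp, h0, zero_mul]
      exact pow_eq_zero_iff (n := 2) (by norm_num) |>.mp this
    have h2 : v 2 ≠ 0 := by
      intro h2; apply hv; funext i; fin_cases i <;> simp [h0, h1, h2]
    rw [Ppt, Projectivization.mk_eq_mk_iff]
    exact ⟨Units.mk0 (v 2) h2, by funext i; fin_cases i <;> simp [iv, Units.smul_def, h0, h1]⟩
  · right
    refine ⟨v 1 / v 0, ?_⟩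
    rw [Kpt, Projectivization.mk_eq_mk_iff]
    refine ⟨Units.mk0 (v 0) h0, ?_⟩
    funext i
    fin_cases i <;> simp [cv, Units.smul_def]
    · field_simp
    · field_simp; linear_combination -hp

lemma mem_star_iff (p : Projectivization F (Fin 3 → F)) :
    p ∈ conicSet F \ {Ppt F} ↔ ∃ t, p = Kpt t := by
  constructor
  · rintro ⟨hp, hne⟩
    rcases conic_classify hp with h | h
    · exact absurd h hne
    · exact h
  · rintro ⟨t, rfl⟩
    exact ⟨Kpt_mem t, Kpt_ne_Ppt t⟩

lemma cv_mem_span_iff {s t : F} (hst : s ≠ t) (u : F) :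
    cv u ∈ Submodule.span F {cv s, cv t} ↔ u = s ∨ u = t := by
  rw [mem_span_cv hst]
  constructor
  · intro h
    have : (u - s) * (u - t) = 0 := by simp [cv] at h; linear_combination h
    rcases mul_eq_zero.mp this with h' | h'
    · exact Or.inl (sub_eq_zero.mp h')
    · exact Or.inr (sub_eq_zero.mp h')
  · rintro (rfl | rfl) <;> simp [cv] <;> ring

lemma Kpt_onLine_iff {s t : F} (hst : s ≠ t) (u : F) :
    onLine F (Kpt u) (Submodule.span F {cv s, cv t}) ↔ u = s ∨ u = t := by
  rw [Kpt, onLine_mk, cv_mem_span_iff hst]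

lemma Ppt_not_onLine {s t : F} (hst : s ≠ t) :
    ¬ onLine F (Ppt F) (Submodule.span F {cv s, cv t}) := by
  rw [Ppt, onLine_mk, mem_span_cv hst]
  simp [iv]

lemma bisecant_span {s t : F} (hst : s ≠ t) :
    isBisecant F (conicSet F \ {Ppt F}) (Submodule.span F {cv s, cv t}) := by
  refine ⟨finrank_span_cv hst, ?_⟩
  refine card_subtype_pair (a := Kpt s) (b := Kpt t) (fun h => hst (Kpt_inj.mp h)) ?_
  intro x
  constructor
  · rintro ⟨hx, hline⟩
    obtain ⟨u, rfl⟩ := (mem_star_iff x).mp hx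
    rcases (Kpt_onLine_iff hst u).mp hline with rfl | rfl
    · exact Or.inl rfl
    · exact Or.inr rfl
  · rintro (rfl | rfl)
    · exact ⟨(mem_star_iff _).mpr ⟨s, rfl⟩, (Kpt_onLine_iff hst s).mpr (Or.inl rfl)⟩
    · exact ⟨(mem_star_iff _).mpr ⟨t, rfl⟩, (Kpt_onLine_iff hst t).mpr (Or.inr rfl)⟩

lemma bisecant_iff (L : Submodule F (Fin 3 → F)) :
    isBisecant F (conicSet F \ {Ppt F}) L ↔
      ∃ s t : F, s ≠ t ∧ L = Submodule.span F {cv s, cv t} := by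
  constructor
  · rintro ⟨hline, hcard⟩
    obtain ⟨x, y, hxy, -⟩ := Nat.card_eq_two_iff.mp hcard
    obtain ⟨s, hs⟩ := (mem_star_iff x.1).mp x.2.1
    obtain ⟨t, ht⟩ := (mem_star_iff y.1).mp y.2.1
    have hst : s ≠ t := by
      rintro rfl
      exact hxy (Subtype.ext (hs.trans ht.symm))
    have hsL : cv s ∈ L := by
      have := x.2.2; rw [hs, Kpt, onLine_mk] at this; exact this
    have htL : cv t ∈ L := by
      have := y.2.2; rw [ht, Kpt, onLine_mk] at this; exact this
    have hle : Submodule.span F {cv s, cv t} ≤ L := by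
      rw [Submodule.span_le, Set.insert_subset_iff, Set.singleton_subset_iff]
      exact ⟨hsL, htL⟩
    refine ⟨s, t, hst, (Submodule.eq_of_le_of_finrank_eq hle ?_).symm⟩
    rw [finrank_span_cv hst, hline]
  · rintro ⟨s, t, hst, rfl⟩
    exact bisecant_span hst

section Counting
variable [Fintype F]

lemma count_through (w : Fin 3 → F) (hw : w ≠ 0) :
    Nat.card {st : F × F // st.1 ≠ st.2 ∧
        w 0 * (st.1 * st.2) - w 1 * (st.1 + st.2) + w 2 = 0} =
      2 * bisecantCount F (conicSet F \ {Ppt F}) (Projectivization.mk F w hw) := by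
  classical
  rw [bisecantCount]
  refine two_to_one (f := fun st => ⟨Submodule.span F {cv st.1.1, cv st.1.2},
    bisecant_span st.2.1,
    (onLine_mk w hw _).mpr ((mem_span_cv st.2.1 w).mpr st.2.2)⟩) ?_ ?_
  · rintro ⟨L, hbis, holL⟩
    obtain ⟨s, t, hst, rfl⟩ := (bisecant_iff L).mp hbis
    exact ⟨⟨(s, t), hst, (mem_span_cv hst w).mp ((onLine_mk w hw _).mp holL)⟩,
      Subtype.ext rfl⟩
  · rintro ⟨L, hbis, holL⟩
    obtain ⟨s, t, hst, rfl⟩ := (bisecant_iff L).mp hbis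
    have hcond : w 0 * (s * t) - w 1 * (s + t) + w 2 = 0 :=
      (mem_span_cv hst w).mp ((onLine_mk w hw _).mp holL)
    have hcond' : w 0 * (t * s) - w 1 * (t + s) + w 2 = 0 := by linear_combination hcond
    refine card_subtype_pair (a := ⟨(s, t), hst, hcond⟩) (b := ⟨(t, s), hst.symm, hcond'⟩)
      (by simp [Subtype.ext_iff, Prod.ext_iff]; intro h; exact absurd h hst) ?_
    intro x
    constructor
    · intro hEq
      have hspan : Submodule.span F {cv x.1.1, cv x.1.2} =
          Submodule.span F {cv s, cv t} := congrArg Subtype.val hEq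
      have hx1 : x.1.1 = s ∨ x.1.1 = t := by
        rw [← cv_mem_span_iff hst, ← hspan]
        exact Submodule.subset_span (Set.mem_insert _ _)
      have hx2 : x.1.2 = s ∨ x.1.2 = t := by
        rw [← cv_mem_span_iff hst, ← hspan]
        exact Submodule.subset_span (Set.mem_insert_of_mem _ rfl)
      have hne := x.2.1
      rcases hx1 with h1 | h1 <;> rcases hx2 with h2 | h2
      · exact absurd (h1.trans h2.symm) hne
      · exact Or.inl (Subtype.ext (Prod.ext h1 h2))
      · exact Or.inr (Subtype.ext (Prod.ext h1 h2))
      · exact absurd (h1.trans h2.symm) hne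
    · rintro (rfl | rfl)
      · rfl
      · exact Subtype.ext (by show Submodule.span F {cv t, cv s} = _; rw [Set.pair_comm])

omit [Fintype F] in
lemma bc_P : bisecantCount F (conicSet F \ {Ppt F}) (Ppt F) = 0 := by
  rw [bisecantCount]
  refine card_subtype_empty ?_
  rintro L ⟨hbis, hol⟩
  obtain ⟨s, t, hst, rfl⟩ := (bisecant_iff L).mp hbis
  exact Ppt_not_onLine hst hol

end Counting

section Cards
variable [Fintype F]

lemma card_ne_one (a : F) : Nat.card {x : F // x ≠ a} = Fintype.card F - 1 := by
  classical
  rw [Nat.card_eq_fintype_card]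
  have : Fintype.card {x : F // ¬ (x = a)} = Fintype.card F - Fintype.card {x : F // x = a} :=
    Fintype.card_subtype_compl _
  rw [Fintype.card_subtype_eq] at this
  exact this

lemma card_ne_three {a b c : F} (hab : a ≠ b) (hac : a ≠ c) (hbc : b ≠ c) :
    Nat.card {x : F // x ≠ a ∧ x ≠ b ∧ x ≠ c} = Fintype.card F - 3 := by
  classical
  rw [Nat.card_congr (Equiv.subtypeEquivRight (q := fun x => ¬ (x = a ∨ x = b ∨ x = c))
    (fun x => by tauto))]
  rw [Nat.card_eq_fintype_card, Fintype.card_subtype_compl, Fintype.card_subtype]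
  have : (Finset.univ.filter (fun x : F => x = a ∨ x = b ∨ x = c)) = {a, b, c} := by
    ext x; simp [Finset.mem_insert]
  rw [this, Finset.card_insert_of_notMem (by simp [hab, hac]),
    Finset.card_insert_of_notMem (by simp [hbc]), Finset.card_singleton]

lemma card_split (P Q : F → Prop) :
    Nat.card {x : F // P x ∧ Q x} + Nat.card {x : F // P x ∧ ¬ Q x} =
      Nat.card {x : F // P x} := by
  classical
  rw [Nat.card_eq_fintype_card, Nat.card_eq_fintype_card, Nat.card_eq_fintype_card,
    Fintype.card_subtype, Fintype.card_subtype, Fintype.card_subtype]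
  have h := Finset.card_filter_add_card_filter_not
    (s := Finset.univ.filter fun x : F => P x) (p := Q)
  rw [Finset.filter_filter, Finset.filter_filter] at h
  convert h using 3

lemma two_ne_zero' (hodd : Odd (Fintype.card F)) : (2 : F) ≠ 0 := by
  intro h2
  have hchar : ringChar F = 2 := by
    have := ringChar.spec F 2
    rcases (Nat.dvd_prime Nat.prime_two).mp (this.mp (by exact_mod_cast h2)) with h | h
    · exact absurd (CharP.ringChar_ne_one (R := F)) (by simp [h])
    · exact h
  have := FiniteField.even_card_of_char_two hchar
  obtain ⟨m, hm⟩ := hodd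
  omega

lemma card_sq (hodd : Odd (Fintype.card F)) :
    2 * Nat.card {d : F // d ≠ 0 ∧ ∃ e, e ^ 2 = d} = Fintype.card F - 1 := by
  classical
  have h2 := two_ne_zero' hodd
  rw [← card_ne_one (0 : F)]
  refine (two_to_one (f := fun e : {x : F // x ≠ 0} =>
    (⟨e.1 ^ 2, pow_ne_zero 2 e.2, e.1, rfl⟩ : {d : F // d ≠ 0 ∧ ∃ e, e ^ 2 = d})) ?_ ?_).symm
  · rintro ⟨d, hd, e, rfl⟩
    exact ⟨⟨e, fun h => hd (by rw [h]; ring)⟩, rfl⟩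
  · rintro ⟨d, hd, e0, rfl⟩
    have he0 : e0 ≠ 0 := fun h => hd (by rw [h]; ring)
    have hne : e0 ≠ -e0 := by
      intro h
      have : 2 * e0 = 0 := by linear_combination h
      rcases mul_eq_zero.mp this with h' | h'
      · exact h2 h'
      · exact he0 h'
    refine card_subtype_pair (a := ⟨e0, he0⟩) (b := ⟨-e0, neg_ne_zero.mpr he0⟩)
      (by simp [Subtype.ext_iff]; intro h; exact hne h) ?_
    intro x
    constructor
    · intro hEq
      have hval : x.1 ^ 2 = e0 ^ 2 := congrArg Subtype.val hEq
      have : (x.1 - e0) * (x.1 + e0) = 0 := by linear_combination hval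
      rcases mul_eq_zero.mp this with h' | h'
      · exact Or.inl (Subtype.ext (sub_eq_zero.mp h'))
      · exact Or.inr (Subtype.ext (eq_neg_of_add_eq_zero_left h'))
    · rintro (rfl | rfl)
      · rfl
      · exact Subtype.ext (by show (-e0) ^ 2 = e0 ^ 2; ring)

end Cards

section PointCounts
variable [Fintype F]

lemma bc_p1_aux {y z : F} (hz : z ≠ y ^ 2) :
    2 * bisecantCount F (conicSet F \ {Ppt F})
        (Projectivization.mk F ![1, y, z] (vec1_ne y z)) =
      Nat.card {s : F // s ≠ y ∧ (s - y) ^ 2 ≠ y ^ 2 - z} := by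
  rw [← count_through ![1, y, z] (vec1_ne y z)]
  have wd : ∀ st : {st : F × F // st.1 ≠ st.2 ∧
      (![1, y, z] : Fin 3 → F) 0 * (st.1 * st.2) -
        (![1, y, z] : Fin 3 → F) 1 * (st.1 + st.2) + (![1, y, z] : Fin 3 → F) 2 = 0},
      st.1.1 ≠ y ∧ (st.1.1 - y) ^ 2 ≠ y ^ 2 - z := by
    rintro ⟨⟨s, t⟩, hst, heq⟩
    simp only [Matrix.cons_val_zero, Matrix.cons_val_one, Matrix.head_cons,
      Matrix.cons_val_two, Matrix.tail_cons] at heq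
    have hy : s ≠ y := by
      intro h
      subst h
      exact hz (by linear_combination heq)
    refine ⟨hy, ?_⟩
    intro hfix
    apply hst
    have h1 : t * (s - y) = y * s - z := by linear_combination heq
    have h2 : s * (s - y) = y * s - z := by linear_combination hfix
    exact mul_right_cancel₀ (sub_ne_zero.mpr hy) (h2.trans h1.symm)
  refine Nat.card_congr (Equiv.ofBijective
    (fun st => ⟨st.1.1, (wd st).1, (wd st).2⟩) ⟨?_, ?_⟩)
  · intro x1 x2 hEq
    have hy : x1.1.1 ≠ y := (wd x1).1
    have hs : x1.1.1 = x2.1.1 := congrArg Subtype.val hEq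
    obtain ⟨⟨s, t⟩, hst, heq⟩ := x1
    obtain ⟨⟨s', t'⟩, hst', heq'⟩ := x2
    simp only at hs hy
    subst hs
    simp only [Matrix.cons_val_zero, Matrix.cons_val_one, Matrix.head_cons,
      Matrix.cons_val_two, Matrix.tail_cons] at heq heq'
    have h1 : t * (s - y) = y * s - z := by linear_combination heq
    have h2 : t' * (s - y) = y * s - z := by linear_combination heq'
    have : t = t' := mul_right_cancel₀ (sub_ne_zero.mpr hy) (h1.trans h2.symm)
    subst this
    rfl
  · rintro ⟨s, hy, hfix⟩
    have hsy : s - y ≠ 0 := sub_ne_zero.mpr hy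
    have h1 : (y * s - z) / (s - y) * (s - y) = y * s - z := div_mul_cancel₀ _ hsy
    have hst : s ≠ (y * s - z) / (s - y) := by
      intro h
      apply hfix
      have h2 : s * (s - y) = y * s - z := by rw [← h] at h1; exact h1
      linear_combination h2
    refine ⟨⟨(s, (y * s - z) / (s - y)), hst, ?_⟩, rfl⟩
    simp only [Matrix.cons_val_zero, Matrix.cons_val_one, Matrix.head_cons,
      Matrix.cons_val_two, Matrix.tail_cons]
    linear_combination h1

lemma bc_p2_aux (z : F) (h2 : (2 : F) ≠ 0) :
    2 * bisecantCount F (conicSet F \ {Ppt F})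
        (Projectivization.mk F ![0, 1, z] (vec2_ne z)) =
      Nat.card {s : F // s ≠ z / 2} := by
  rw [← count_through ![0, 1, z] (vec2_ne z)]
  have key : ∀ s : F, 2 * s ≠ z ↔ s ≠ z / 2 := by
    intro s
    constructor
    · intro h hs; exact h (by rw [hs]; field_simp)
    · intro h hs; exact h (by rw [eq_div_iff h2]; linear_combination hs)
  have wd : ∀ st : {st : F × F // st.1 ≠ st.2 ∧
      (![0, 1, z] : Fin 3 → F) 0 * (st.1 * st.2) -
        (![0, 1, z] : Fin 3 → F) 1 * (st.1 + st.2) + (![0, 1, z] : Fin 3 → F) 2 = 0},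
      st.1.1 ≠ z / 2 := by
    rintro ⟨⟨s, t⟩, hst, heq⟩
    simp only [Matrix.cons_val_zero, Matrix.cons_val_one, Matrix.head_cons,
      Matrix.cons_val_two, Matrix.tail_cons] at heq
    refine (key s).mp ?_
    intro h
    apply hst
    have ht : t = z - s := by linear_combination -heq
    show s = t
    linear_combination h - ht
  refine Nat.card_congr (Equiv.ofBijective (fun st => ⟨st.1.1, wd st⟩) ⟨?_, ?_⟩)
  · rintro ⟨⟨s, t⟩, hst, heq⟩ ⟨⟨s', t'⟩, hst', heq'⟩ hEq
    simp only [Subtype.mk.injEq] at hEq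
    subst hEq
    simp only [Matrix.cons_val_zero, Matrix.cons_val_one, Matrix.head_cons,
      Matrix.cons_val_two, Matrix.tail_cons] at heq heq'
    have : t = t' := by linear_combination heq' - heq
    subst this
    rfl
  · rintro ⟨s, hs⟩
    have h2s : 2 * s ≠ z := (key s).mpr hs
    refine ⟨⟨(s, z - s), ?_, by simp⟩, rfl⟩
    intro h
    apply h2s
    linear_combination h

end PointCounts

section Values
variable [Fintype F]

lemma bc_p1_sq {y z : F} (hodd : Odd (Fintype.card F)) (hz : z ≠ y ^ 2)
    (hsq : ∃ e : F, e ^ 2 = y ^ 2 - z) :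
    bisecantCount F (conicSet F \ {Ppt F})
      (Projectivization.mk F ![1, y, z] (vec1_ne y z)) = (Fintype.card F - 3) / 2 := by
  obtain ⟨e, he⟩ := hsq
  have hd : y ^ 2 - z ≠ 0 := sub_ne_zero.mpr (Ne.symm hz)
  have he0 : e ≠ 0 := by
    intro h; rw [h] at he; exact hd (by linear_combination -he)
  have h2 : (2 : F) ≠ 0 := two_ne_zero' hodd
  have hye1 : y ≠ y + e := by
    intro h; exact he0 (by linear_combination -h)
  have hye2 : y ≠ y - e := by
    intro h; exact he0 (by linear_combination h)
  have h2e : y + e ≠ y - e := by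
    intro h
    have h2e' : 2 * e = 0 := by linear_combination h
    rcases mul_eq_zero.mp h2e' with h' | h'
    · exact h2 h'
    · exact he0 h'
  have key := bc_p1_aux (F := F) hz
  have hcard : Nat.card {s : F // s ≠ y ∧ (s - y) ^ 2 ≠ y ^ 2 - z} =
      Fintype.card F - 3 := by
    rw [Nat.card_congr (Equiv.subtypeEquivRight
      (q := fun s => s ≠ y ∧ s ≠ y + e ∧ s ≠ y - e) ?_)]
    · exact card_ne_three hye1 hye2 h2e
    · intro s
      constructor
      · rintro ⟨h1, h2'⟩
        refine ⟨h1, ?_, ?_⟩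
        · intro h; exact h2' (by rw [h]; linear_combination he)
        · intro h; exact h2' (by rw [h]; linear_combination he)
      · rintro ⟨h1, h2', h3⟩
        refine ⟨h1, ?_⟩
        intro h
        have hfac : (s - y - e) * (s - y + e) = 0 := by linear_combination h - he
        rcases mul_eq_zero.mp hfac with h' | h'
        · exact h2' (by linear_combination h')
        · exact h3 (by linear_combination h')
  rw [hcard] at key
  obtain ⟨m, hm⟩ := hodd
  omega

lemma bc_p1_ns {y z : F} (hodd : Odd (Fintype.card F)) (hz : z ≠ y ^ 2)
    (hns : ¬ ∃ e : F, e ^ 2 = y ^ 2 - z) :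
    bisecantCount F (conicSet F \ {Ppt F})
      (Projectivization.mk F ![1, y, z] (vec1_ne y z)) = (Fintype.card F - 1) / 2 := by
  have key := bc_p1_aux (F := F) hz
  have hcard : Nat.card {s : F // s ≠ y ∧ (s - y) ^ 2 ≠ y ^ 2 - z} =
      Fintype.card F - 1 := by
    rw [Nat.card_congr (Equiv.subtypeEquivRight (q := fun s => s ≠ y) ?_)]
    · exact card_ne_one y
    · intro s
      constructor
      · exact fun h => h.1
      · intro h
        exact ⟨h, fun hh => hns ⟨s - y, hh⟩⟩
  rw [hcard] at key
  obtain ⟨m, hm⟩ := hodd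
  omega

lemma bc_p2_val {z : F} (hodd : Odd (Fintype.card F)) :
    bisecantCount F (conicSet F \ {Ppt F})
      (Projectivization.mk F ![0, 1, z] (vec2_ne z)) = (Fintype.card F - 1) / 2 := by
  have h2 : (2 : F) ≠ 0 := two_ne_zero' hodd
  have key := bc_p2_aux (F := F) z h2
  rw [card_ne_one (z / 2)] at key
  obtain ⟨m, hm⟩ := hodd
  omega

lemma p1_mem_star (y z : F) :
    Projectivization.mk F ![1, y, z] (vec1_ne y z) ∈ conicSet F \ {Ppt F} ↔ z = y ^ 2 := by
  constructor
  · rintro ⟨hc, -⟩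
    rw [mem_conic_iff] at hc
    simpa using hc
  · intro h
    refine ⟨by rw [mem_conic_iff]; simpa using h, ?_⟩
    simp only [Set.mem_singleton_iff, Ppt, Ne, Projectivization.mk_eq_mk_iff]
    rintro ⟨a, ha⟩
    have h0 := congrFun ha 0
    simp [iv, Units.smul_def] at h0
  
lemma p2_not_mem_star (z : F) :
    Projectivization.mk F ![0, 1, z] (vec2_ne z) ∉ conicSet F \ {Ppt F} := by
  rintro ⟨hc, -⟩
  rw [mem_conic_iff] at hc
  simp at hc

lemma Ppt_not_mem_star : Ppt F ∉ conicSet F \ {Ppt F} := by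
  rintro ⟨-, h⟩
  exact h rfl

def shiftE (Q : F → Prop) :
    {p : F × F // p.2 ≠ p.1 ^ 2 ∧ Q (p.1 ^ 2 - p.2)} ≃ F × {d : F // d ≠ 0 ∧ Q d} where
  toFun p := (p.1.1, ⟨p.1.1 ^ 2 - p.1.2, sub_ne_zero.mpr (Ne.symm p.2.1), p.2.2⟩)
  invFun x := ⟨(x.1, x.1 ^ 2 - x.2.1),
    by intro h; exact x.2.2.1 (by linear_combination -h),
    by rw [sub_sub_cancel]; exact x.2.2.2⟩
  left_inv p := by
    apply Subtype.ext
    apply Prod.ext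
    · rfl
    · show p.1.1 ^ 2 - (p.1.1 ^ 2 - p.1.2) = p.1.2
      ring
  right_inv x := by
    apply Prod.ext
    · rfl
    · apply Subtype.ext
      show x.1 ^ 2 - (x.1 ^ 2 - x.2.1) = x.2.1
      ring

end Values

section Main
variable [Fintype F]

lemma class_card (pred : Projectivization F (Fin 3 → F) → Prop) :
    Nat.card {p : Projectivization F (Fin 3 → F) // pred p} =
      Nat.card {yz : F × F //
          pred (Projectivization.mk F ![1, yz.1, yz.2] (vec1_ne yz.1 yz.2))} +
      (Nat.card {z : F // pred (Projectivization.mk F ![0, 1, z] (vec2_ne z))} +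
       Nat.card {u : Unit // pred (Ppt F)}) := by
  have e1 : {x : (F × F) ⊕ (F ⊕ Unit) // pred (enum x)} ≃
      {p : Projectivization F (Fin 3 → F) // pred p} :=
    Equiv.subtypeEquiv (Equiv.ofBijective enum enum_bijective) (fun a => Iff.rfl)
  rw [← Nat.card_congr e1, Nat.card_congr (Equiv.subtypeSum), Nat.card_sum,
    Nat.card_congr (Equiv.subtypeSum (p := fun x : F ⊕ Unit => pred (enum (Sum.inr x)))),
    Nat.card_sum]
  rfl

lemma card_nonsq (hodd : Odd (Fintype.card F)) :
    2 * Nat.card {d : F // d ≠ 0 ∧ ¬ ∃ e : F, e ^ 2 = d} = Fintype.card F - 1 := by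
  have h1 := card_split (F := F) (fun d => d ≠ 0) (fun d => ∃ e, e ^ 2 = d)
  have h2 := card_sq hodd
  rw [card_ne_one (0 : F)] at h1
  have h3 : 1 ≤ Fintype.card F := Fintype.card_pos
  omega

lemma card_inl (Q : F → Prop) :
    Nat.card {yz : F × F // yz.2 ≠ yz.1 ^ 2 ∧ Q (yz.1 ^ 2 - yz.2)} =
      Fintype.card F * Nat.card {d : F // d ≠ 0 ∧ Q d} := by
  rw [Nat.card_congr (shiftE Q), Nat.card_prod, Nat.card_eq_fintype_card]

theorem main_inf (hodd : Odd (Fintype.card F)) (hq5 : 5 ≤ Fintype.card F) :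
    Nat.card {p : Projectivization F (Fin 3 → F) // p ∉ conicSet F \ {Ppt F}} =
        Fintype.card F ^ 2 + 1 ∧
    Nat.card {p : Projectivization F (Fin 3 → F) // p ∉ conicSet F \ {Ppt F} ∧
        bisecantCount F (conicSet F \ {Ppt F}) p = (Fintype.card F - 1) / 2} =
      (Fintype.card F ^ 2 + Fintype.card F) / 2 ∧
    Nat.card {p : Projectivization F (Fin 3 → F) // p ∉ conicSet F \ {Ppt F} ∧
        bisecantCount F (conicSet F \ {Ppt F}) p = (Fintype.card F - 3) / 2} =
      (Fintype.card F ^ 2 - Fintype.card F) / 2 ∧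
    bisecantCount F (conicSet F \ {Ppt F}) (Ppt F) = 0 ∧
    Nat.card {p : Projectivization F (Fin 3 → F) // p ∉ conicSet F \ {Ppt F} ∧
        bisecantCount F (conicSet F \ {Ppt F}) p = 0} = 1 := by
  classical
  obtain ⟨m, hm⟩ := id hodd
  have hq1 : 1 ≤ Fintype.card F := Fintype.card_pos
  have hNs : Nat.card {d : F // d ≠ 0 ∧ ∃ e : F, e ^ 2 = d} = m := by
    have := card_sq hodd; omega
  have hNn : Nat.card {d : F // d ≠ 0 ∧ ¬ ∃ e : F, e ^ 2 = d} = m := by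
    have := card_nonsq hodd; omega
  refine ⟨?_, ?_, ?_, bc_P, ?_⟩
  · rw [class_card (fun p => p ∉ conicSet F \ {Ppt F})]
    have c1 : Nat.card {yz : F × F //
        Projectivization.mk F ![1, yz.1, yz.2] (vec1_ne yz.1 yz.2) ∉ conicSet F \ {Ppt F}} =
        Fintype.card F * (Fintype.card F - 1) := by
      rw [Nat.card_congr (Equiv.subtypeEquivRight
        (q := fun yz : F × F => yz.2 ≠ yz.1 ^ 2 ∧ (fun _ : F => True) (yz.1 ^ 2 - yz.2))
        (fun yz => by rw [p1_mem_star]; simp))]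
      refine (card_inl (fun _ : F => True)).trans ?_
      congr 1
      rw [Nat.card_congr (Equiv.subtypeEquivRight (q := fun d : F => d ≠ 0) (by simp))]
      exact card_ne_one 0
    have c2 : Nat.card {z : F //
        Projectivization.mk F ![0, 1, z] (vec2_ne z) ∉ conicSet F \ {Ppt F}} =
        Fintype.card F := by
      rw [Nat.card_congr (Equiv.subtypeUnivEquiv (fun z => p2_not_mem_star z)),
        Nat.card_eq_fintype_card]
    have c3 : Nat.card {u : Unit // Ppt F ∉ conicSet F \ {Ppt F}} = 1 :=
      card_subtype_unique (a := ()) (fun x => ⟨fun _ => rfl, fun _ => Ppt_not_mem_star⟩)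
    rw [c1, c2, c3]
    have hsq : Fintype.card F ^ 2 = Fintype.card F * Fintype.card F := sq (Fintype.card F)
    have h2 : Fintype.card F * (Fintype.card F - 1) =
        Fintype.card F * Fintype.card F - Fintype.card F * 1 := Nat.mul_sub ..
    have hge : Fintype.card F ≤ Fintype.card F * Fintype.card F :=
      Nat.le_mul_of_pos_left _ hq1
    omega
  · rw [class_card (fun p => p ∉ conicSet F \ {Ppt F} ∧
      bisecantCount F (conicSet F \ {Ppt F}) p = (Fintype.card F - 1) / 2)]
    have c1 : Nat.card {yz : F × F //
        Projectivization.mk F ![1, yz.1, yz.2] (vec1_ne yz.1 yz.2) ∉ conicSet F \ {Ppt F} ∧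
        bisecantCount F (conicSet F \ {Ppt F})
          (Projectivization.mk F ![1, yz.1, yz.2] (vec1_ne yz.1 yz.2)) =
          (Fintype.card F - 1) / 2} =
        Fintype.card F * m := by
      rw [Nat.card_congr (Equiv.subtypeEquivRight
        (q := fun yz : F × F => yz.2 ≠ yz.1 ^ 2 ∧
          (fun d : F => ¬ ∃ e : F, e ^ 2 = d) (yz.1 ^ 2 - yz.2)) ?_)]
      · exact (card_inl (fun d : F => ¬ ∃ e : F, e ^ 2 = d)).trans (by rw [hNn])
      · rintro ⟨y, z⟩
        simp only [p1_mem_star]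
        constructor
        · rintro ⟨h1, h2⟩
          refine ⟨h1, ?_⟩
          intro hsq
          rw [bc_p1_sq hodd h1 hsq] at h2
          omega
        · rintro ⟨h1, h2⟩
          exact ⟨h1, bc_p1_ns hodd h1 h2⟩
    have c2 : Nat.card {z : F //
        Projectivization.mk F ![0, 1, z] (vec2_ne z) ∉ conicSet F \ {Ppt F} ∧
        bisecantCount F (conicSet F \ {Ppt F})
          (Projectivization.mk F ![0, 1, z] (vec2_ne z)) = (Fintype.card F - 1) / 2} =
        Fintype.card F := by
      rw [Nat.card_congr (Equiv.subtypeUnivEquiv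
        (fun z => ⟨p2_not_mem_star z, bc_p2_val hodd⟩)), Nat.card_eq_fintype_card]
    have c3 : Nat.card {u : Unit // Ppt F ∉ conicSet F \ {Ppt F} ∧
        bisecantCount F (conicSet F \ {Ppt F}) (Ppt F) = (Fintype.card F - 1) / 2} = 0 := by
      refine card_subtype_empty (fun u hu => ?_)
      rw [bc_P] at hu
      have := hu.2
      omega
    rw [c1, c2, c3]
    have hqq : Fintype.card F ^ 2 = 2 * (Fintype.card F * m) + Fintype.card F := by
      rw [hm]; ring
    omega
  · rw [class_card (fun p => p ∉ conicSet F \ {Ppt F} ∧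
      bisecantCount F (conicSet F \ {Ppt F}) p = (Fintype.card F - 3) / 2)]
    have c1 : Nat.card {yz : F × F //
        Projectivization.mk F ![1, yz.1, yz.2] (vec1_ne yz.1 yz.2) ∉ conicSet F \ {Ppt F} ∧
        bisecantCount F (conicSet F \ {Ppt F})
          (Projectivization.mk F ![1, yz.1, yz.2] (vec1_ne yz.1 yz.2)) =
          (Fintype.card F - 3) / 2} =
        Fintype.card F * m := by
      rw [Nat.card_congr (Equiv.subtypeEquivRight
        (q := fun yz : F × F => yz.2 ≠ yz.1 ^ 2 ∧
          (fun d : F => ∃ e : F, e ^ 2 = d) (yz.1 ^ 2 - yz.2)) ?_)]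
      · exact (card_inl (fun d : F => ∃ e : F, e ^ 2 = d)).trans (by rw [hNs])
      · rintro ⟨y, z⟩
        simp only [p1_mem_star]
        constructor
        · rintro ⟨h1, h2⟩
          refine ⟨h1, ?_⟩
          by_contra hns
          rw [bc_p1_ns hodd h1 hns] at h2
          omega
        · rintro ⟨h1, h2⟩
          exact ⟨h1, bc_p1_sq hodd h1 h2⟩
    have c2 : Nat.card {z : F //
        Projectivization.mk F ![0, 1, z] (vec2_ne z) ∉ conicSet F \ {Ppt F} ∧
        bisecantCount F (conicSet F \ {Ppt F})
          (Projectivization.mk F ![0, 1, z] (vec2_ne z)) = (Fintype.card F - 3) / 2} = 0 := by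
      refine card_subtype_empty (fun z hz => ?_)
      have := hz.2
      rw [bc_p2_val hodd] at this
      omega
    have c3 : Nat.card {u : Unit // Ppt F ∉ conicSet F \ {Ppt F} ∧
        bisecantCount F (conicSet F \ {Ppt F}) (Ppt F) = (Fintype.card F - 3) / 2} = 0 := by
      refine card_subtype_empty (fun u hu => ?_)
      rw [bc_P] at hu
      have := hu.2
      omega
    rw [c1, c2, c3]
    have hqq : Fintype.card F ^ 2 = 2 * (Fintype.card F * m) + Fintype.card F := by
      rw [hm]; ring
    omega
  · rw [class_card (fun p => p ∉ conicSet F \ {Ppt F} ∧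
      bisecantCount F (conicSet F \ {Ppt F}) p = 0)]
    have c1 : Nat.card {yz : F × F //
        Projectivization.mk F ![1, yz.1, yz.2] (vec1_ne yz.1 yz.2) ∉ conicSet F \ {Ppt F} ∧
        bisecantCount F (conicSet F \ {Ppt F})
          (Projectivization.mk F ![1, yz.1, yz.2] (vec1_ne yz.1 yz.2)) = 0} = 0 := by
      refine card_subtype_empty ?_
      rintro ⟨y, z⟩ ⟨h1, h2⟩
      rw [p1_mem_star] at h1
      by_cases hsq : ∃ e : F, e ^ 2 = y ^ 2 - z
      · rw [bc_p1_sq hodd h1 hsq] at h2; omega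
      · rw [bc_p1_ns hodd h1 hsq] at h2; omega
    have c2 : Nat.card {z : F //
        Projectivization.mk F ![0, 1, z] (vec2_ne z) ∉ conicSet F \ {Ppt F} ∧
        bisecantCount F (conicSet F \ {Ppt F})
          (Projectivization.mk F ![0, 1, z] (vec2_ne z)) = 0} = 0 := by
      refine card_subtype_empty (fun z hz => ?_)
      have := hz.2
      rw [bc_p2_val hodd] at this
      omega
    have c3 : Nat.card {u : Unit // Ppt F ∉ conicSet F \ {Ppt F} ∧
        bisecantCount F (conicSet F \ {Ppt F}) (Ppt F) = 0} = 1 :=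
      card_subtype_unique (a := ()) (fun x => ⟨fun _ => rfl, fun _ => ⟨Ppt_not_mem_star, bc_P⟩⟩)
    rw [c1, c2, c3]

end Main

section Transfer

variable (g : (Fin 3 → F) ≃ₗ[F] (Fin 3 → F))

noncomputable def pmap : Projectivization F (Fin 3 → F) ≃ Projectivization F (Fin 3 → F) where
  toFun := Projectivization.map g.toLinearMap g.injective
  invFun := Projectivization.map g.symm.toLinearMap g.symm.injective
  left_inv p := by
    induction' p using Projectivization.ind with v hv
    rw [Projectivization.map_mk, Projectivization.map_mk]
    simp only [LinearEquiv.coe_coe, LinearEquiv.symm_apply_apply]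
  right_inv p := by
    induction' p using Projectivization.ind with v hv
    rw [Projectivization.map_mk, Projectivization.map_mk]
    simp only [LinearEquiv.coe_coe, LinearEquiv.apply_symm_apply]

lemma pmap_mk (v : Fin 3 → F) (hv : v ≠ 0) :
    pmap g (Projectivization.mk F v hv) =
      Projectivization.mk F (g v) (fun h => hv (by
        have := congrArg g.symm h
        simpa using this)) := by
  unfold pmap
  simp only [Equiv.coe_fn_mk]
  rw [Projectivization.map_mk]
  rfl

variable (hQ : ∀ v : Fin 3 → F, (g v) 0 * (g v) 2 - ((g v) 1) ^ 2 = v 0 * v 2 - (v 1) ^ 2)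

include hQ in
lemma pmap_conic (p : Projectivization F (Fin 3 → F)) :
    pmap g p ∈ conicSet F ↔ p ∈ conicSet F := by
  induction' p using Projectivization.ind with v hv
  rw [pmap_mk, mem_conic_iff, mem_conic_iff, ← sub_eq_zero, ← sub_eq_zero (a := v 0 * v 2)]
  rw [hQ v]

lemma pmap_onLine (p : Projectivization F (Fin 3 → F)) (L : Submodule F (Fin 3 → F)) :
    onLine F (pmap g p) (L.map g.toLinearMap) ↔ onLine F p L := by
  induction' p using Projectivization.ind with v hv
  rw [pmap_mk, onLine_mk, onLine_mk]
  constructor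
  · rintro h
    obtain ⟨u, hu, huv⟩ := h
    rwa [← g.injective huv]
  · intro h
    exact ⟨v, h, rfl⟩

lemma isLine_map (L : Submodule F (Fin 3 → F)) :
    isLine F (L.map g.toLinearMap) ↔ isLine F L := by
  unfold isLine
  rw [LinearEquiv.finrank_map_eq g L]

end Transfer

section Transfer2

variable (g : (Fin 3 → F) ≃ₗ[F] (Fin 3 → F))
variable (hQ : ∀ v : Fin 3 → F, (g v) 0 * (g v) 2 - ((g v) 1) ^ 2 = v 0 * v 2 - (v 1) ^ 2)
variable (P : Projectivization F (Fin 3 → F)) (hgP : pmap g P = Ppt F)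

include hQ hgP in
lemma mem_star_transfer (p : Projectivization F (Fin 3 → F)) :
    pmap g p ∈ conicSet F \ {Ppt F} ↔ p ∈ conicSet F \ {P} := by
  have hiff : pmap g p = Ppt F ↔ p = P := by
    constructor
    · intro h
      apply (pmap g).injective
      rw [h, hgP]
    · intro h
      rw [h, hgP]
  constructor
  · rintro ⟨h1, h2⟩
    exact ⟨(pmap_conic g hQ p).mp h1, fun h => h2 (hiff.mpr h)⟩
  · rintro ⟨h1, h2⟩
    exact ⟨(pmap_conic g hQ p).mpr h1, fun h => h2 (hiff.mp h)⟩

include hQ hgP in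
lemma bisecant_transfer (L : Submodule F (Fin 3 → F)) :
    isBisecant F (conicSet F \ {Ppt F}) (L.map g.toLinearMap) ↔
      isBisecant F (conicSet F \ {P}) L := by
  unfold isBisecant
  rw [isLine_map]
  refine and_congr Iff.rfl ?_
  have e : {p : Projectivization F (Fin 3 → F) //
      p ∈ conicSet F \ {P} ∧ onLine F p L} ≃
      {p : Projectivization F (Fin 3 → F) //
        p ∈ conicSet F \ {Ppt F} ∧ onLine F p (L.map g.toLinearMap)} :=
    Equiv.subtypeEquiv (pmap g) (fun p =>
      and_congr (mem_star_transfer g hQ P hgP p).symm (pmap_onLine g p L).symm)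
  rw [Nat.card_congr e]

include hQ hgP in
lemma count_transfer (p : Projectivization F (Fin 3 → F)) :
    bisecantCount F (conicSet F \ {P}) p =
      bisecantCount F (conicSet F \ {Ppt F}) (pmap g p) := by
  unfold bisecantCount
  have e : {L : Submodule F (Fin 3 → F) //
      isBisecant F (conicSet F \ {P}) L ∧ onLine F p L} ≃
      {L : Submodule F (Fin 3 → F) //
        isBisecant F (conicSet F \ {Ppt F}) L ∧ onLine F (pmap g p) L} :=
    Equiv.subtypeEquiv (Submodule.orderIsoMapComap g).toEquiv (fun L =>
      and_congr (bisecant_transfer g hQ P hgP L).symm (pmap_onLine g p L).symm)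
  rw [Nat.card_congr e]

end Transfer2

def gl (a : F) : (Fin 3 → F) ≃ₗ[F] (Fin 3 → F) where
  toFun v := ![a ^ 2 * v 0 - 2 * a * v 1 + v 2, v 1 - a * v 0, v 0]
  invFun w := ![w 2, w 1 + a * w 2, w 0 + 2 * a * w 1 + a ^ 2 * w 2]
  map_add' u v := by funext i; fin_cases i <;> simp <;> ring
  map_smul' c v := by funext i; fin_cases i <;> simp <;> ring
  left_inv v := by funext i; fin_cases i <;> simp <;> ring
  right_inv w := by funext i; fin_cases i <;> simp <;> ring

lemma gl_hQ (a : F) : ∀ v : Fin 3 → F,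
    (gl a v) 0 * (gl a v) 2 - ((gl a v) 1) ^ 2 = v 0 * v 2 - (v 1) ^ 2 := by
  intro v
  show (![a ^ 2 * v 0 - 2 * a * v 1 + v 2, v 1 - a * v 0, v 0] : Fin 3 → F) 0 * _ - _ = _
  simp [gl]
  ring

lemma gl_cv (a : F) : gl a (cv a) = iv F := by
  funext i
  fin_cases i <;> simp [gl, cv, iv] <;> ring

lemma gl_hgP (a : F) : pmap (gl a) (Kpt a) = Ppt F := by
  rw [Kpt, pmap_mk]
  rw [Ppt]
  rw [Projectivization.mk_eq_mk_iff]
  exact ⟨1, by rw [gl_cv]; simp⟩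

end CP

/-- Proposition 5.4(i): let `q ≥ 5` be odd (a prime power, being the cardinality of a
field), `K` the conic in `PG(2,q)`, `P ∈ K`, and `K* = K \ {P}`. The `q²+1` points off
`K*` split into: `(q²+q)/2` points each on exactly `(q-1)/2` bisecants of `K*`,
`(q²-q)/2` points each on exactly `(q-3)/2` bisecants of `K*`, and the single point
`P` on `0` bisecants of `K*`. -/
theorem shortened_conic_point_classes (F : Type) [Field F] [Fintype F] (q : ℕ)
    (hq : Fintype.card F = q) (hq5 : 5 ≤ q) (hodd : Odd q)
    (P : Projectivization F (Fin 3 → F)) (hP : P ∈ conicSet F) :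
    Nat.card {p : Projectivization F (Fin 3 → F) // p ∉ conicSet F \ {P}} = q ^ 2 + 1 ∧
    Nat.card {p : Projectivization F (Fin 3 → F) // p ∉ conicSet F \ {P} ∧
        bisecantCount F (conicSet F \ {P}) p = (q - 1) / 2} = (q ^ 2 + q) / 2 ∧
    Nat.card {p : Projectivization F (Fin 3 → F) // p ∉ conicSet F \ {P} ∧
        bisecantCount F (conicSet F \ {P}) p = (q - 3) / 2} = (q ^ 2 - q) / 2 ∧
    bisecantCount F (conicSet F \ {P}) P = 0 ∧
    Nat.card {p : Projectivization F (Fin 3 → F) // p ∉ conicSet F \ {P} ∧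
        bisecantCount F (conicSet F \ {P}) p = 0} = 1 := by
  subst hq
  rcases CP.conic_classify hP with rfl | ⟨a, rfl⟩
  · exact CP.main_inf hodd hq5
  · have hQ := CP.gl_hQ (F := F) a
    have hgP := CP.gl_hgP (F := F) a
    obtain ⟨A, B, C, D, E⟩ := CP.main_inf (F := F) hodd hq5
    have memt := CP.mem_star_transfer (CP.gl a) hQ (CP.Kpt a) hgP
    have cnt := CP.count_transfer (CP.gl a) hQ (CP.Kpt a) hgP
    refine ⟨?_, ?_, ?_, ?_, ?_⟩
    · rw [← A]
      exact Nat.card_congr (Equiv.subtypeEquiv (CP.pmap (CP.gl a))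
        (fun p => not_congr (memt p).symm))
    · rw [← B]
      exact Nat.card_congr (Equiv.subtypeEquiv (CP.pmap (CP.gl a))
        (fun p => and_congr (not_congr (memt p).symm) (by rw [cnt p])))
    · rw [← C]
      exact Nat.card_congr (Equiv.subtypeEquiv (CP.pmap (CP.gl a))
        (fun p => and_congr (not_congr (memt p).symm) (by rw [cnt p])))
    · rw [cnt (CP.Kpt a), hgP]
      exact D
    · rw [← E]
      exact Nat.card_congr (Equiv.subtypeEquiv (CP.pmap (CP.gl a))
        (fun p => and_congr (not_congr (memt p).symm) (by rw [cnt p])))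
end
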